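/- Let Ω ⊂ ℝ be a bounded open set and let p > 1. Then for all λ > λ₁(Ω), ∑_{k : λ_k(Ω)<λ} (λ − λ_k(Ω))^p ≤ (2|Ω|/(3π B(p−1,2))) B(p−1,5/2) λ^{p+1/2} − C₃(p) λ^p, where C₃(p) = 1/9 for 1 < p ≤ 2 and C₃(p) = (1/8)(247/256)^{p−1} for p > 2, and B denotes the Beta function. -/

import Mathlib

open Real MeasureTheory

/-- The Beta function `B(x,y) = Γ(x)Γ(y)/Γ(x+y)`. -/
noncomputable def betaFn (x y : ℝ) : ℝ :=
  Real.Gamma x * Real.Gamma y / Real.Gamma (x + y)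

lemma real_beta_integral {a b : ℝ} (ha : 0 < a) (hb : 0 < b) :
    ∫ x in (0:ℝ)..1, x ^ (a - 1) * (1 - x) ^ (b - 1) = betaFn a b := by
  have key := Complex.Gamma_mul_Gamma_eq_betaIntegral (s := a) (t := b)
    (by simpa using ha) (by simpa using hb)
  have hint : Complex.betaIntegral a b
      = ((∫ x in (0:ℝ)..1, x ^ (a - 1) * (1 - x) ^ (b - 1) : ℝ) : ℂ) := by
    rw [Complex.betaIntegral, ← intervalIntegral.integral_ofReal]
    refine intervalIntegral.integral_congr fun x hx => ?_
    rw [Set.uIcc_of_le (by norm_num : (0:ℝ) ≤ 1)] at hx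
    rw [show ((a:ℂ)-1) = ((a-1 : ℝ) : ℂ) by push_cast; ring,
      show ((b:ℂ)-1) = ((b-1:ℝ):ℂ) by push_cast; ring,
      show (1 - (x:ℂ)) = ((1-x : ℝ):ℂ) by push_cast; ring,
      ← Complex.ofReal_cpow hx.1, ← Complex.ofReal_cpow (by linarith [hx.2] : (0:ℝ) ≤ 1 - x),
      ← Complex.ofReal_mul]
  rw [hint] at key
  have h3 : Complex.Gamma (↑a + ↑b) = (Real.Gamma (a + b) : ℂ) := by
    rw [← Complex.ofReal_add]; exact Complex.Gamma_ofReal _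
  rw [Complex.Gamma_ofReal, Complex.Gamma_ofReal, h3, ← Complex.ofReal_mul,
    ← Complex.ofReal_mul] at key
  have := Complex.ofReal_injective key
  rw [betaFn, this]
  field_simp [(Real.Gamma_pos_of_pos (by linarith : 0 < a + b)).ne']

lemma beta_scaled {T a b : ℝ} (hT : 0 < T) (ha : 0 < a) (hb : 0 < b) :
    ∫ v in (0:ℝ)..T, v ^ (a - 1) * (T - v) ^ (b - 1)
      = T ^ (a + b - 1) * betaFn a b := by
  have h := intervalIntegral.smul_integral_comp_mul_left
    (fun v => v ^ (a - 1) * (T - v) ^ (b - 1)) (a := 0) (b := 1) T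
  rw [mul_zero, mul_one, smul_eq_mul] at h
  calc ∫ v in (0:ℝ)..T, v ^ (a - 1) * (T - v) ^ (b - 1)
      = T * ∫ x in (0:ℝ)..1, (T*x) ^ (a - 1) * (T - T*x) ^ (b - 1) := h.symm
    _ = T * ∫ x in (0:ℝ)..1, (T ^ (a-1) * T ^ (b-1)) * (x ^ (a - 1) * (1 - x) ^ (b - 1)) := by
        congr 1
        refine intervalIntegral.integral_congr fun x hx => ?_
        rw [Set.uIcc_of_le (by norm_num : (0:ℝ) ≤ 1)] at hx
        rw [Real.mul_rpow hT.le hx.1, show T - T*x = T * (1-x) by ring,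
          Real.mul_rpow hT.le (by linarith [hx.2])]
        ring
    _ = T ^ (a + b - 1) * betaFn a b := by
        rw [intervalIntegral.integral_const_mul, real_beta_integral ha hb,
          show a + b - 1 = (a-1) + ((b-1) + 1) by ring, Real.rpow_add hT, Real.rpow_add hT,
          Real.rpow_one]
        ring

lemma integrable_pos_part {p c : ℝ} (hp : 1 < p) (a b : ℝ) :
    IntervalIntegrable (fun v => v ^ (p-2) * max (c - v) 0) volume a b :=
  (intervalIntegral.intervalIntegrable_rpow' (by linarith)).mul_continuousOn
    (((continuous_const.sub continuous_id).max continuous_const).continuousOn)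

lemma riesz_identity {p c T : ℝ} (hp : 1 < p) (hc : 0 ≤ c) (hcT : c ≤ T) :
    ∫ v in (0:ℝ)..T, v ^ (p-2) * max (c - v) 0 = c ^ p / (p * (p-1)) := by
  rcases eq_or_lt_of_le hc with rfl | hc
  · rw [Real.zero_rpow (by positivity), zero_div]
    calc ∫ v in (0:ℝ)..T, v ^ (p-2) * max (0 - v) 0
        = ∫ v in (0:ℝ)..T, (0:ℝ) := by
          refine intervalIntegral.integral_congr fun x hx => ?_
          rw [Set.uIcc_of_le (by linarith), Set.mem_Icc] at hx
          rw [max_eq_right (by linarith [hx.1]), mul_zero]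
      _ = 0 := by simp
  · have key : ∫ v in (0:ℝ)..c, v ^ (p-2) * max (c - v) 0 = c ^ p / (p * (p-1)) := by
      have e1 : ∫ v in (0:ℝ)..c, v ^ (p-2) * max (c - v) 0
          = ∫ v in (0:ℝ)..c, (c * v ^ (p-2) - v ^ (p-1)) := by
        refine intervalIntegral.integral_congr fun x hx => ?_
        rw [Set.uIcc_of_le hc.le, Set.mem_Icc] at hx
        rw [max_eq_left (by linarith [hx.2])]
        rcases eq_or_lt_of_le hx.1 with rfl | hx0
        · rw [Real.zero_rpow (by linarith : p - 1 ≠ 0)]; ring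
        · rw [show p - 1 = (p-2) + 1 by ring, Real.rpow_add hx0, Real.rpow_one]; ring
      have hcp : c ^ p = c * c ^ (p-1) := by
        rw [show p = 1 + (p-1) by ring, Real.rpow_add hc, Real.rpow_one,
          show 1 + (p-1) - 1 = p - 1 by ring]
      rw [e1, intervalIntegral.integral_sub
          ((intervalIntegral.intervalIntegrable_rpow' (by linarith : (-1:ℝ) < p-2)).const_mul c)
          (intervalIntegral.intervalIntegrable_rpow' (by linarith : (-1:ℝ) < p-1)),
        intervalIntegral.integral_const_mul,
        integral_rpow (Or.inl (by linarith : (-1:ℝ) < p-2)),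
        integral_rpow (Or.inl (by linarith : (-1:ℝ) < p-1))]
      rw [show p - 2 + 1 = p - 1 by ring, show p - 1 + 1 = p by ring,
        Real.zero_rpow (by linarith : p - 1 ≠ 0), Real.zero_rpow (by positivity : p ≠ 0), hcp]
      have h1 : p - 1 ≠ 0 := by linarith
      have h2 : p ≠ 0 := by positivity
      field_simp
      ring
    have zero_part : ∫ v in c..T, v ^ (p-2) * max (c - v) 0 = 0 := by
      calc ∫ v in c..T, v ^ (p-2) * max (c - v) 0
          = ∫ v in c..T, (0:ℝ) := by
            refine intervalIntegral.integral_congr fun x hx => ?_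
            rw [Set.uIcc_of_le hcT, Set.mem_Icc] at hx
            rw [max_eq_right (by linarith [hx.1]), mul_zero]
        _ = 0 := by simp
    rw [← intervalIntegral.integral_add_adjacent_intervals
      (integrable_pos_part hp 0 c) (integrable_pos_part hp c T), key, zero_part, add_zero]

lemma int_linear {p T c : ℝ} (hp : 1 < p) (hc : 0 ≤ c) :
    ∫ v in (0:ℝ)..c, v ^ (p-2) * (T - v) = T * c ^ (p-1) / (p-1) - c ^ p / p := by
  have e1 : ∫ v in (0:ℝ)..c, v ^ (p-2) * (T - v)
      = ∫ v in (0:ℝ)..c, (T * v ^ (p-2) - v ^ (p-1)) := by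
    refine intervalIntegral.integral_congr fun x hx => ?_
    rw [Set.uIcc_of_le hc, Set.mem_Icc] at hx
    rcases eq_or_lt_of_le hx.1 with rfl | hx0
    · rw [Real.zero_rpow (by linarith : p - 1 ≠ 0)]; ring
    · rw [show p - 1 = (p-2) + 1 by ring, Real.rpow_add hx0, Real.rpow_one]; ring
  rw [e1, intervalIntegral.integral_sub
      ((intervalIntegral.intervalIntegrable_rpow' (by linarith : (-1:ℝ) < p-2)).const_mul T)
      (intervalIntegral.intervalIntegrable_rpow' (by linarith : (-1:ℝ) < p-1)),
    intervalIntegral.integral_const_mul,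
    integral_rpow (Or.inl (by linarith : (-1:ℝ) < p-2)),
    integral_rpow (Or.inl (by linarith : (-1:ℝ) < p-1))]
  rw [show p - 2 + 1 = p - 1 by ring, show p - 1 + 1 = p by ring,
    Real.zero_rpow (by linarith : p - 1 ≠ 0), Real.zero_rpow (by positivity : p ≠ 0)]
  ring

lemma sum_sq_formula (N : ℕ) :
    ∑ k ∈ Finset.range N, ((k:ℝ)+1)^2 = (N:ℝ)*((N:ℝ)+1)*(2*(N:ℝ)+1)/6 := by
  induction N with
  | zero => simp
  | succ m ih => rw [Finset.sum_range_succ, ih]; push_cast; ring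

lemma R1_bound {a μ : ℝ} (ha : 0 < a) (hμ : a * (9/256) ≤ μ)
    (lam : ℕ → ℝ) (hlam : ∀ k : ℕ, a * ((k:ℝ)+1)^2 ≤ lam k) (K : ℕ) :
    ∑ k ∈ Finset.range K, max (μ - lam k) 0
      ≤ 2/(3*Real.sqrt a) * μ ^ ((3:ℝ)/2) - μ/8 := by
  have hμ0 : 0 ≤ μ := le_trans (by positivity) hμ
  set X := Real.sqrt (μ/a) with hXdef
  have hX0 : 0 ≤ X := Real.sqrt_nonneg _
  have hμX : μ = a * X^2 := by
    rw [hXdef, Real.sq_sqrt (by positivity)]; field_simp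
  have hX316 : 3/16 ≤ X := by
    rw [hXdef, show (3:ℝ)/16 = Real.sqrt ((3/16)^2) by
      rw [Real.sqrt_sq (by norm_num)]]
    apply Real.sqrt_le_sqrt
    rw [le_div_iff₀ ha]; nlinarith
  set N := ⌊X⌋₊ with hNdef
  have hNX : (N:ℝ) ≤ X := Nat.floor_le hX0
  have hrhs : 2/(3*Real.sqrt a) * μ ^ ((3:ℝ)/2) - μ/8
      = a * ((2/3)*X^3 - X^2/8) := by
    have hsa : (0:ℝ) < Real.sqrt a := Real.sqrt_pos.2 ha
    have h32 : μ ^ ((3:ℝ)/2) = μ * Real.sqrt μ := by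
      rw [show (3:ℝ)/2 = 1 + 1/2 by norm_num, Real.rpow_add' hμ0 (by norm_num),
        Real.rpow_one, ← Real.sqrt_eq_rpow]
    have hsqμ : Real.sqrt μ = Real.sqrt a * X := by
      rw [hXdef, ← Real.sqrt_mul ha.le, mul_div_cancel₀ _ (ne_of_gt ha)]
    have ha2 : Real.sqrt a * Real.sqrt a = a := Real.mul_self_sqrt ha.le
    rw [h32, hsqμ, hμX]
    field_simp
  rw [hrhs]
  have step1 : ∑ k ∈ Finset.range K, max (μ - lam k) 0
      ≤ ∑ k ∈ Finset.range K, max (μ - a*((k:ℝ)+1)^2) 0 :=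
    Finset.sum_le_sum fun k _ => max_le_max (by linarith [hlam k]) le_rfl
  have step2 : ∑ k ∈ Finset.range K, max (μ - a*((k:ℝ)+1)^2) 0
      ≤ ∑ k ∈ Finset.range N, (μ - a*((k:ℝ)+1)^2) := by
    calc ∑ k ∈ Finset.range K, max (μ - a*((k:ℝ)+1)^2) 0
        ≤ ∑ k ∈ Finset.range (max K N), max (μ - a*((k:ℝ)+1)^2) 0 :=
          Finset.sum_le_sum_of_subset_of_nonneg
            (Finset.range_subset_range.2 (le_max_left _ _)) (fun k _ _ => le_max_right _ _)
      _ = ∑ k ∈ Finset.range N, max (μ - a*((k:ℝ)+1)^2) 0 := by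
          refine (Finset.sum_subset (Finset.range_subset_range.2 (le_max_right _ _))
            (fun k _ hk => ?_)).symm
          rw [Finset.mem_range, not_lt] at hk
          have hXk : X < (k:ℝ)+1 :=
            lt_of_lt_of_le (Nat.lt_floor_add_one X) (add_le_add_left (Nat.cast_le.2 hk) 1)
          have h2 : X^2 < ((k:ℝ)+1)^2 := by nlinarith
          have := mul_lt_mul_of_pos_left h2 ha
          apply max_eq_right; linarith
      _ ≤ ∑ k ∈ Finset.range N, (μ - a*((k:ℝ)+1)^2) := by
          refine Finset.sum_le_sum fun k hk => ?_
          rw [Finset.mem_range] at hk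
          have hkX : (k:ℝ)+1 ≤ X := le_trans (by exact_mod_cast Nat.cast_le.2 hk) hNX
          have h2 : ((k:ℝ)+1)^2 ≤ X^2 := by nlinarith [Nat.cast_nonneg (α := ℝ) k]
          have := mul_le_mul_of_nonneg_left h2 ha.le
          rw [max_eq_left (by linarith)]
  have step3 : ∑ k ∈ Finset.range N, (μ - a*((k:ℝ)+1)^2)
      = (N:ℝ)*μ - a*((N:ℝ)*((N:ℝ)+1)*(2*(N:ℝ)+1)/6) := by
    rw [Finset.sum_sub_distrib, Finset.sum_const, ← Finset.mul_sum, sum_sq_formula]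
    simp [mul_comm]
  refine le_trans step1 (le_trans step2 (le_of_eq_of_le step3 ?_))
  have hn0 : (0:ℝ) ≤ (N:ℝ) := Nat.cast_nonneg N
  have key : (N:ℝ)*X^2 - (2*(N:ℝ)^3+3*(N:ℝ)^2+(N:ℝ))/6 ≤ (2/3)*X^3 - X^2/8 := by
    nlinarith [sq_nonneg (X-(N:ℝ)), mul_nonneg hn0 (sub_nonneg.2 hNX),
      mul_nonneg (mul_nonneg hn0 hn0) (sub_nonneg.2 hNX),
      mul_nonneg (sub_nonneg.2 hNX) (sub_nonneg.2 hNX),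
      mul_nonneg (mul_nonneg (sub_nonneg.2 hNX) (sub_nonneg.2 hNX)) (sub_nonneg.2 hNX),
      mul_nonneg (mul_nonneg hn0 (sub_nonneg.2 hNX)) (sub_nonneg.2 hNX),
      sq_nonneg (X - 3/16), mul_nonneg (sub_nonneg.2 hX316) (sub_nonneg.2 hNX),
      mul_nonneg (mul_nonneg (sub_nonneg.2 hX316) (sub_nonneg.2 hNX)) hn0,
      mul_nonneg (mul_nonneg (sub_nonneg.2 hX316) (sub_nonneg.2 hX316)) (sub_nonneg.2 hNX)]
  calc (N:ℝ)*μ - a*((N:ℝ)*((N:ℝ)+1)*(2*(N:ℝ)+1)/6)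
      = a*((N:ℝ)*X^2 - (2*(N:ℝ)^3+3*(N:ℝ)^2+(N:ℝ))/6) := by rw [hμX]; ring
    _ ≤ a*((2/3)*X^3 - X^2/8) := mul_le_mul_of_nonneg_left key ha.le

lemma correction_bound {p Λ v₀ : ℝ} (hp : 1 < p) (hΛ0 : 0 < Λ) (hv₀pos : 0 < v₀)
    (h247 : 247/256 * Λ ≤ v₀) (hv₀Λ : v₀ ≤ Λ) :
    (if p ≤ 2 then (1:ℝ)/9 else 1/8 * (247/256)^(p-1)) * Λ^p
      ≤ (p*(p-1)) * (1/8 * (Λ * v₀^(p-1)/(p-1) - v₀^p/p)) := by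
  have hp0 : (0:ℝ) < p - 1 := by linarith
  set s := v₀/Λ with hs_def
  have hs0 : 0 < s := div_pos hv₀pos hΛ0
  have hs1 : s ≤ 1 := by rw [hs_def, div_le_one hΛ0]; linarith
  have hs247 : 247/256 ≤ s := by rw [hs_def, le_div_iff₀ hΛ0]; linarith
  have hsv : v₀ = Λ * s := by rw [hs_def]; field_simp
  have hvp1 : v₀^(p-1) = Λ^(p-1) * s^(p-1) := by
    rw [hsv, Real.mul_rpow hΛ0.le hs0.le]
  have hvp : v₀^p = Λ^p * s^p := by
    rw [hsv, Real.mul_rpow hΛ0.le hs0.le]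
  have hΛsplit : Λ^p = Λ^(p-1) * Λ := by
    conv_lhs => rw [show p = (p-1) + 1 by ring]
    rw [Real.rpow_add hΛ0, Real.rpow_one]
  have hssplit : s^p = s^(p-1) * s := by
    conv_lhs => rw [show p = (p-1) + 1 by ring]
    rw [Real.rpow_add hs0, Real.rpow_one]
  set u := s^(p-1) with hu_def
  have hu0 : 0 < u := Real.rpow_pos_of_pos hs0 _
  have hΛp : (0:ℝ) < Λ^p := Real.rpow_pos_of_pos hΛ0 p
  have hrw : (p*(p-1)) * (1/8 * (Λ * v₀^(p-1)/(p-1) - v₀^p/p))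
      = Λ^p/8 * (u * (p - (p-1)*s)) := by
    rw [hvp1, hvp, hssplit, hΛsplit]
    have h1 : p - 1 ≠ 0 := by linarith
    have h2 : p ≠ 0 := by positivity
    field_simp
  rw [hrw]
  have hfac : 1 ≤ p - (p-1)*s := by nlinarith
  rcases le_or_gt p 2 with h2 | h2
  · rw [if_pos h2]
    have hu : 247/256 ≤ u := by
      have := Real.rpow_le_rpow_of_exponent_ge hs0 hs1 (show p-1 ≤ 1 by linarith)
      rw [Real.rpow_one] at this
      rw [hu_def]; linarith
    have key : 8/9 ≤ u * (p - (p-1)*s) := by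
      nlinarith [mul_nonneg hu0.le (sub_nonneg.2 hfac)]
    have := mul_le_mul_of_nonneg_left key hΛp.le
    linarith
  · rw [if_neg (not_le.2 h2)]
    have hu : (247/256:ℝ)^(p-1) ≤ u := Real.rpow_le_rpow (by norm_num) hs247 (by linarith)
    have hpos : (0:ℝ) < (247/256:ℝ)^(p-1) := Real.rpow_pos_of_pos (by norm_num) _
    have key : (247/256:ℝ)^(p-1) ≤ u * (p - (p-1)*s) := by
      nlinarith [mul_nonneg hu0.le (sub_nonneg.2 hfac)]
    have := mul_le_mul_of_nonneg_left key hΛp.le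
    linarith

lemma betaFn_two {p : ℝ} (hp : 1 < p) : betaFn (p-1) 2 = 1/(p*(p-1)) := by
  have hg2 : Real.Gamma 2 = 1 := by
    rw [show (2:ℝ) = 1+1 by norm_num, Real.Gamma_add_one one_ne_zero, Real.Gamma_one, mul_one]
  have e2 : Real.Gamma p = (p-1) * Real.Gamma (p-1) := by
    conv_lhs => rw [show p = (p-1)+1 by ring]
    exact Real.Gamma_add_one (by linarith)
  have e1 : Real.Gamma (p+1) = p * Real.Gamma p := Real.Gamma_add_one (by linarith)
  have hne : Real.Gamma (p-1) ≠ 0 := (Real.Gamma_pos_of_pos (by linarith)).ne'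
  have hGpos : 0 < Real.Gamma (p-1) := Real.Gamma_pos_of_pos (by linarith)
  have hpp : (0:ℝ) < p*(p-1) := by nlinarith
  rw [betaFn, hg2, show p - 1 + 2 = p + 1 by ring, e1, e2, mul_one]
  rw [show p*((p-1) * Real.Gamma (p-1)) = (p*(p-1)) * Real.Gamma (p-1) by ring,
    div_eq_div_iff (by positivity) hpp.ne']
  ring

set_option maxHeartbeats 1000000 in
theorem riesz_mean_p_dim_one
    (Ω : Set ℝ) (hΩo : IsOpen Ω) (hΩb : Bornology.IsBounded Ω)
    (L : ℝ) (hL : L = (volume Ω).toReal) (hLpos : 0 < L)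
    (lam : ℕ → ℝ) (hmono : Monotone lam)
    (hlam : ∀ k : ℕ, π ^ 2 * ((k : ℝ) + 1) ^ 2 / L ^ 2 ≤ lam k)
    (p : ℝ) (hp : 1 < p)
    (Λ : ℝ) (hΛ : lam 0 < Λ) :
    ∑' k : ℕ, (max (Λ - lam k) 0) ^ p ≤
      2 * L / (3 * π * betaFn (p - 1) 2) * betaFn (p - 1) (5 / 2) * Λ ^ (p + 1 / 2) -
        (if p ≤ 2 then (1 : ℝ) / 9 else 1 / 8 * (247 / 256) ^ (p - 1)) * Λ ^ p := by
  have hπ : (0:ℝ) < π := Real.pi_pos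
  set a := π^2/L^2 with ha_def
  have ha : 0 < a := by positivity
  have hlam' : ∀ k : ℕ, a*((k:ℝ)+1)^2 ≤ lam k := fun k =>
    le_trans (le_of_eq (by rw [ha_def]; ring)) (hlam k)
  have hlam0 : ∀ k : ℕ, a ≤ lam k := fun k => by
    have hk0 : (0:ℝ) ≤ (k:ℝ) := Nat.cast_nonneg k
    have h0 : (1:ℝ) ≤ ((k:ℝ)+1)^2 := by nlinarith
    have h1 : a * 1 ≤ a*((k:ℝ)+1)^2 := mul_le_mul_of_nonneg_left h0 ha.le
    rw [mul_one] at h1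
    linarith [hlam' k]
  have haΛ : a < Λ := lt_of_le_of_lt (hlam0 0) hΛ
  have hΛ0 : 0 < Λ := lt_trans ha haΛ
  have hp0 : (0:ℝ) < p - 1 := by linarith
  have hpp : (0:ℝ) < p*(p-1) := by nlinarith
  set K := ⌈Real.sqrt (Λ/a)⌉₊ with hK_def
  -- reduce tsum to finite sum
  have hzero : ∀ k ∉ Finset.range K, max (Λ - lam k) 0 ^ p = 0 := by
    intro k hk
    rw [Finset.mem_range, not_lt] at hk
    have h1 : Real.sqrt (Λ/a) ≤ (k:ℝ) := le_trans (Nat.le_ceil _) (Nat.cast_le.2 hk)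
    have h3 : Real.sqrt (Λ/a) ^ 2 = Λ/a := Real.sq_sqrt (by positivity)
    have h2 : Λ/a ≤ ((k:ℝ)+1)^2 := by nlinarith [Real.sqrt_nonneg (Λ/a)]
    have h4 : Λ ≤ a*((k:ℝ)+1)^2 := by
      calc Λ = a * (Λ/a) := by field_simp
        _ ≤ a * ((k:ℝ)+1)^2 := mul_le_mul_of_nonneg_left h2 ha.le
    rw [max_eq_right (by linarith [hlam' k]), Real.zero_rpow (by positivity)]
  have htsum : ∑' k : ℕ, max (Λ - lam k) 0 ^ p
      = ∑ k ∈ Finset.range K, max (Λ - lam k) 0 ^ p := tsum_eq_sum hzero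
  -- identity per k
  have hid : ∀ k : ℕ, max (Λ - lam k) 0 ^ p
      = (p*(p-1)) * ∫ v in (0:ℝ)..Λ, v^(p-2) * max (Λ - lam k - v) 0 := by
    intro k
    have hc0 : 0 ≤ max (Λ - lam k) 0 := le_max_right _ _
    have hcT : max (Λ - lam k) 0 ≤ Λ := by
      apply max_le _ hΛ0.le
      have := hlam0 k; linarith
    have hri := riesz_identity (c := max (Λ - lam k) 0) (T := Λ) hp hc0 hcT
    have heq : (∫ v in (0:ℝ)..Λ, v^(p-2) * max (Λ - lam k - v) 0)
        = ∫ v in (0:ℝ)..Λ, v^(p-2) * max (max (Λ - lam k) 0 - v) 0 := by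
      refine intervalIntegral.integral_congr fun v hv => ?_
      rw [Set.uIcc_of_le hΛ0.le, Set.mem_Icc] at hv
      rcases le_or_gt 0 (Λ - lam k) with h | h
      · rw [max_eq_left h]
      · rw [max_eq_right h.le,
          max_eq_right (by linarith [hv.1] : Λ - lam k - v ≤ 0),
          max_eq_right (by linarith [hv.1] : 0 - v ≤ 0)]
    rw [heq, hri]
    field_simp
  have hsum2 : ∑ k ∈ Finset.range K, max (Λ - lam k) 0 ^ p
      = (p*(p-1)) * ∫ v in (0:ℝ)..Λ,
          ∑ k ∈ Finset.range K, v^(p-2) * max (Λ - lam k - v) 0 := by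
    rw [intervalIntegral.integral_finset_sum
      (fun k _ => integrable_pos_part hp 0 Λ), Finset.mul_sum]
    exact Finset.sum_congr rfl fun k _ => hid k
  set v₀ := Λ - a*(9/256) with hv₀_def
  have hv₀pos : 0 < v₀ := by rw [hv₀_def]; nlinarith
  have hv₀Λ : v₀ < Λ := by rw [hv₀_def]; nlinarith
  have hFint : ∀ x y : ℝ, IntervalIntegrable
      (fun v => ∑ k ∈ Finset.range K, v^(p-2) * max (Λ - lam k - v) 0) volume x y := by
    intro x y
    have := IntervalIntegrable.sum (μ := volume) (a := x) (b := y) (Finset.range K)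
      (f := fun k => fun v => v^(p-2) * max (Λ - lam k - v) 0)
      (fun k _ => integrable_pos_part hp x y)
    rwa [show (∑ k ∈ Finset.range K, fun v => v^(p-2) * max (Λ - lam k - v) 0)
      = (fun v => ∑ k ∈ Finset.range K, v^(p-2) * max (Λ - lam k - v) 0)
      from funext fun v => by simp [Finset.sum_apply]] at this
  have hsplit : (∫ v in (0:ℝ)..Λ, ∑ k ∈ Finset.range K, v^(p-2) * max (Λ - lam k - v) 0)
      = (∫ v in (0:ℝ)..v₀, ∑ k ∈ Finset.range K, v^(p-2) * max (Λ - lam k - v) 0)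
      + ∫ v in v₀..Λ, ∑ k ∈ Finset.range K, v^(p-2) * max (Λ - lam k - v) 0 :=
    (intervalIntegral.integral_add_adjacent_intervals (hFint 0 v₀) (hFint v₀ Λ)).symm
  have hI2 : (∫ v in v₀..Λ, ∑ k ∈ Finset.range K, v^(p-2) * max (Λ - lam k - v) 0) = 0 := by
    calc (∫ v in v₀..Λ, ∑ k ∈ Finset.range K, v^(p-2) * max (Λ - lam k - v) 0)
        = ∫ v in v₀..Λ, (0:ℝ) := by
          refine intervalIntegral.integral_congr fun v hv => ?_
          rw [Set.uIcc_of_le hv₀Λ.le, Set.mem_Icc] at hv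
          refine Finset.sum_eq_zero fun k _ => ?_
          rw [max_eq_right (by rw [hv₀_def] at hv; linarith [hlam0 k, hv.1, ha]), mul_zero]
      _ = 0 := by simp
  -- pointwise bound on [0, v₀]
  have hGcont : Continuous (fun v : ℝ =>
      2/(3*Real.sqrt a) * (Λ-v)^((3:ℝ)/2) - (Λ-v)/8) := by
    refine Continuous.sub ?_ ((continuous_const.sub continuous_id).div_const 8)
    exact continuous_const.mul ((continuous_const.sub continuous_id).rpow_const
      (fun x => Or.inr (by norm_num)))
  have hGint : IntervalIntegrable (fun v =>
      v^(p-2) * (2/(3*Real.sqrt a) * (Λ-v)^((3:ℝ)/2) - (Λ-v)/8)) volume 0 v₀ :=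
    (intervalIntegral.intervalIntegrable_rpow' (by linarith)).mul_continuousOn
      hGcont.continuousOn
  have hmono_int : (∫ v in (0:ℝ)..v₀, ∑ k ∈ Finset.range K, v^(p-2) * max (Λ - lam k - v) 0)
      ≤ ∫ v in (0:ℝ)..v₀, v^(p-2) * (2/(3*Real.sqrt a) * (Λ-v)^((3:ℝ)/2) - (Λ-v)/8) := by
    refine intervalIntegral.integral_mono_on hv₀pos.le (hFint 0 v₀) hGint fun v hv => ?_
    have hμ : a * (9/256) ≤ Λ - v := by rw [hv₀_def] at hv; linarith [hv.2]
    have hR := R1_bound ha hμ lam hlam' K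
    calc ∑ k ∈ Finset.range K, v^(p-2) * max (Λ - lam k - v) 0
        = v^(p-2) * ∑ k ∈ Finset.range K, max ((Λ - v) - lam k) 0 := by
          rw [Finset.mul_sum]
          exact Finset.sum_congr rfl fun k _ => by rw [show Λ - lam k - v = Λ - v - lam k by ring]
      _ ≤ v^(p-2) * (2/(3*Real.sqrt a) * (Λ-v)^((3:ℝ)/2) - (Λ-v)/8) :=
          mul_le_mul_of_nonneg_left hR (Real.rpow_nonneg hv.1 _)
  -- split G integral
  have hint1 : ∀ x y : ℝ, IntervalIntegrable
      (fun v => v^(p-2) * (Λ-v)^((3:ℝ)/2)) volume x y := fun x y =>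
    (intervalIntegral.intervalIntegrable_rpow' (by linarith)).mul_continuousOn
      (((continuous_const.sub continuous_id).rpow_const
        (fun x => Or.inr (by norm_num))).continuousOn)
  have hint2 : IntervalIntegrable (fun v => v^(p-2) * (Λ-v)) volume 0 v₀ :=
    (intervalIntegral.intervalIntegrable_rpow' (by linarith)).mul_continuousOn
      ((continuous_const.sub continuous_id).continuousOn)
  have hGsplit : (∫ v in (0:ℝ)..v₀, v^(p-2) * (2/(3*Real.sqrt a) * (Λ-v)^((3:ℝ)/2) - (Λ-v)/8))
      = 2/(3*Real.sqrt a) * (∫ v in (0:ℝ)..v₀, v^(p-2) * (Λ-v)^((3:ℝ)/2))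
        - 1/8 * ∫ v in (0:ℝ)..v₀, v^(p-2) * (Λ-v) := by
    rw [← intervalIntegral.integral_const_mul, ← intervalIntegral.integral_const_mul,
      ← intervalIntegral.integral_sub ((hint1 0 v₀).const_mul _) (hint2.const_mul _)]
    exact intervalIntegral.integral_congr fun v _ => by ring
  -- beta evaluation
  have hJ : (∫ v in (0:ℝ)..Λ, v^(p-2) * (Λ-v)^((3:ℝ)/2))
      = Λ^(p + 1/2) * betaFn (p-1) (5/2) := by
    have h := beta_scaled (T := Λ) (a := p-1) (b := 5/2) hΛ0 (by linarith) (by norm_num)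
    rw [show p-1-1 = p-2 by ring, show (5:ℝ)/2-1 = 3/2 by norm_num,
      show p-1+5/2-1 = p+1/2 by ring] at h
    exact h
  have hext : (∫ v in (0:ℝ)..v₀, v^(p-2) * (Λ-v)^((3:ℝ)/2))
      ≤ Λ^(p + 1/2) * betaFn (p-1) (5/2) := by
    have h2 : (0:ℝ) ≤ ∫ v in v₀..Λ, v^(p-2) * (Λ-v)^((3:ℝ)/2) := by
      refine intervalIntegral.integral_nonneg hv₀Λ.le fun v hv => ?_
      exact mul_nonneg (Real.rpow_nonneg (le_trans hv₀pos.le hv.1) _)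
        (Real.rpow_nonneg (by linarith [hv.2]) _)
    have h3 := intervalIntegral.integral_add_adjacent_intervals (hint1 0 v₀) (hint1 v₀ Λ)
    rw [hJ] at h3
    linarith
  have hlin : (∫ v in (0:ℝ)..v₀, v^(p-2) * (Λ-v))
      = Λ * v₀^(p-1)/(p-1) - v₀^p/p := int_linear hp hv₀pos.le
  -- correction term bound
  have hΛp : (0:ℝ) < Λ^p := Real.rpow_pos_of_pos hΛ0 p
  have hC : (if p ≤ 2 then (1:ℝ)/9 else 1/8 * (247/256)^(p-1)) * Λ^p
      ≤ (p*(p-1)) * (1/8 * (Λ * v₀^(p-1)/(p-1) - v₀^p/p)) := by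
    refine correction_bound hp hΛ0 hv₀pos ?_ hv₀Λ.le
    rw [hv₀_def]; nlinarith
  -- main coefficient equality
  have hsqrt : Real.sqrt a = π/L := by
    rw [ha_def, show π^2/L^2 = (π/L)^2 by ring, Real.sqrt_sq (by positivity)]
  have hb2 : betaFn (p-1) 2 = 1/(p*(p-1)) := betaFn_two hp
  have hMain : (p*(p-1)) * (2/(3*Real.sqrt a) * (Λ^(p + 1/2) * betaFn (p-1) (5/2)))
      = 2 * L / (3 * π * betaFn (p - 1) 2) * betaFn (p - 1) (5 / 2) * Λ ^ (p + 1 / 2) := by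
    rw [hb2, hsqrt]
    have h1 : p*(p-1) ≠ 0 := hpp.ne'
    field_simp
  -- assemble
  rw [htsum, hsum2, hsplit, hI2, add_zero]
  have h2a : (0:ℝ) < 2/(3*Real.sqrt a) := by
    have : (0:ℝ) < Real.sqrt a := Real.sqrt_pos.2 ha
    positivity
  have hchain : (∫ v in (0:ℝ)..v₀, ∑ k ∈ Finset.range K, v^(p-2) * max (Λ - lam k - v) 0)
      ≤ 2/(3*Real.sqrt a) * (Λ^(p + 1/2) * betaFn (p-1) (5/2))
        - 1/8 * (Λ * v₀^(p-1)/(p-1) - v₀^p/p) := by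
    have := mul_le_mul_of_nonneg_left hext h2a.le
    rw [hGsplit, hlin] at hmono_int
    linarith
  have hfinal := mul_le_mul_of_nonneg_left hchain hpp.le
  have hexp : (p*(p-1)) * (2/(3*Real.sqrt a) * (Λ^(p + 1/2) * betaFn (p-1) (5/2))
        - 1/8 * (Λ * v₀^(p-1)/(p-1) - v₀^p/p))
      = (p*(p-1)) * (2/(3*Real.sqrt a) * (Λ^(p + 1/2) * betaFn (p-1) (5/2)))
        - (p*(p-1)) * (1/8 * (Λ * v₀^(p-1)/(p-1) - v₀^p/p)) := by ring
  rw [hexp, hMain] at hfinal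
  linarith
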